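/- arXiv:1204.1281 — 2 statements merged into one kernel-verified Lean document; each statement's English description precedes it below -/
import Mathlib

section
/- If f ∈ L^p with p ≥ 1 and s > p, then for every λ > 0, G_x f(2λ)_{p,s} ≤ 2^{1/p - 1/s} · G_x f(λ)_{p,s}, where G_x f(δ)_{p,s} = (Σ_{k=1}^{[π/δ]} ((1/(kδ)) ∫_{(k-1)δ}^{kδ} |φ_x(t)|^p dt)^{s/p})^{1/s}. -/
open MeasureTheory Real intervalIntegral Finset

noncomputable section

set_option maxHeartbeats 800000

lemma aux_add_rpow_le (a b r : ℝ) (ha : 0 ≤ a) (hb : 0 ≤ b) (hr : 1 ≤ r) :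
    (a + b) ^ r ≤ 2 ^ (r - 1) * (a ^ r + b ^ r) := by
  have h := NNReal.rpow_add_le_mul_rpow_add_rpow a.toNNReal b.toNNReal hr
  rw [← NNReal.coe_le_coe] at h
  push_cast at h
  simpa [Real.coe_toNNReal a ha, Real.coe_toNNReal b hb] using h

lemma aux_sum_Icc_two_mul (c : ℕ → ℝ) (N : ℕ) :
    ∑ j ∈ Finset.Icc 1 (2 * N), c j = ∑ k ∈ Finset.Icc 1 N, (c (2 * k - 1) + c (2 * k)) := by
  induction N with
  | zero => simp
  | succ n ih =>
    rw [Finset.sum_Icc_succ_top (by omega : 1 ≤ n + 1),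
      show 2 * (n + 1) = (2 * n + 1) + 1 by omega,
      Finset.sum_Icc_succ_top (by omega : 1 ≤ 2 * n + 1 + 1),
      Finset.sum_Icc_succ_top (by omega : 1 ≤ 2 * n + 1), ih,
      show (2 * n + 1 + 1 : ℕ) - 1 = 2 * n + 1 by omega]
    ring

/-- Doubling property of the Gabisonia characteristic:
`G_x f(2λ)_{p,s} ≤ 2^(1/p-1/s) G_x f(λ)_{p,s}`. -/
theorem gabisonia_doubling
    (f : ℝ → ℝ) (hper : ∀ t, f (t + 2 * π) = f t)
    (p s lam : ℝ) (hp : 1 ≤ p) (hs : p < s) (hlam : 0 < lam) (x : ℝ)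
    (hint : IntervalIntegrable
      (fun t => |f (x + t) + f (x - t) - 2 * f x| ^ p) volume (-π) π) :
    (∑ k ∈ Finset.Icc 1 ⌊π / (2 * lam)⌋₊,
        ((1 / (k * (2 * lam))) * ∫ t in ((k : ℝ) - 1) * (2 * lam)..(k : ℝ) * (2 * lam),
          |f (x + t) + f (x - t) - 2 * f x| ^ p) ^ (s / p)) ^ (1 / s)
      ≤ 2 ^ (1 / p - 1 / s) *
        (∑ k ∈ Finset.Icc 1 ⌊π / lam⌋₊,
          ((1 / (k * lam)) * ∫ t in ((k : ℝ) - 1) * lam..(k : ℝ) * lam,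
            |f (x + t) + f (x - t) - 2 * f x| ^ p) ^ (s / p)) ^ (1 / s) := by
  have hp0 : (0:ℝ) < p := lt_of_lt_of_le one_pos hp
  have hs0 : (0:ℝ) < s := hp0.trans hs
  have hr1 : 1 ≤ s / p := (one_le_div hp0).2 hs.le
  have hπ : (0:ℝ) < π := Real.pi_pos
  set g : ℝ → ℝ := fun t => |f (x + t) + f (x - t) - 2 * f x| ^ p with hgdef
  have hg0 : ∀ t, 0 ≤ g t := fun t => Real.rpow_nonneg (abs_nonneg _) p
  set N := ⌊π / (2 * lam)⌋₊ with hN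
  set M := ⌊π / lam⌋₊ with hM
  have hNle : (N:ℝ) ≤ π / (2 * lam) := Nat.floor_le (by positivity)
  have h2NM : 2 * N ≤ M := by
    apply Nat.le_floor
    have h : π / lam = 2 * (π / (2 * lam)) := by field_simp
    push_cast
    rw [h]; linarith
  have hintg : ∀ a b : ℝ, 0 ≤ a → a ≤ b → b ≤ π → IntervalIntegrable g volume a b := by
    intro a b ha hab hb
    apply hint.mono_set
    rw [Set.uIcc_of_le hab, Set.uIcc_of_le (by linarith)]
    exact Set.Icc_subset_Icc (by linarith) hb
  set A : ℕ → ℝ := fun j => (1 / (j * lam)) * ∫ t in ((j : ℝ) - 1) * lam..(j : ℝ) * lam, g t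
    with hA
  have hAnn : ∀ j : ℕ, 0 ≤ A j := by
    intro j
    apply mul_nonneg (by positivity)
    apply intervalIntegral.integral_nonneg (by nlinarith [Nat.cast_nonneg (α := ℝ) j])
    intro u _; exact hg0 u
  set B : ℕ → ℝ := fun k => (1 / (k * (2 * lam))) *
    ∫ t in ((k : ℝ) - 1) * (2 * lam)..(k : ℝ) * (2 * lam), g t with hB
  show (∑ k ∈ Finset.Icc 1 N, (B k) ^ (s / p)) ^ (1 / s)
      ≤ 2 ^ (1 / p - 1 / s) * (∑ j ∈ Finset.Icc 1 M, (A j) ^ (s / p)) ^ (1 / s)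
  have hBnn : ∀ k : ℕ, 0 ≤ B k := by
    intro k
    apply mul_nonneg (by positivity)
    apply intervalIntegral.integral_nonneg (by nlinarith [Nat.cast_nonneg (α := ℝ) k])
    intro u _; exact hg0 u
  have key : ∑ k ∈ Finset.Icc 1 N, (B k) ^ (s / p)
      ≤ 2 ^ (s / p - 1) * ∑ j ∈ Finset.Icc 1 M, (A j) ^ (s / p) := by
    have step1 : ∀ k ∈ Finset.Icc 1 N, (B k) ^ (s / p)
        ≤ 2 ^ (s / p - 1) * ((A (2 * k - 1)) ^ (s / p) + (A (2 * k)) ^ (s / p)) := by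
      intro k hk
      rw [Finset.mem_Icc] at hk
      obtain ⟨hk1, hkN⟩ := hk
      have hkR : (1:ℝ) ≤ (k:ℝ) := by exact_mod_cast hk1
      have hkNR : (k:ℝ) ≤ (N:ℝ) := by exact_mod_cast hkN
      have hbπ : (k:ℝ) * (2 * lam) ≤ π := by
        have : (N:ℝ) * (2 * lam) ≤ π := by
          rw [← le_div_iff₀ (by positivity)]; exact hNle
        nlinarith
      have ha0 : (0:ℝ) ≤ ((k:ℝ) - 1) * (2 * lam) := by nlinarith
      have ham : ((k:ℝ) - 1) * (2 * lam) ≤ (2 * (k:ℝ) - 1) * lam := by nlinarith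
      have hmb : (2 * (k:ℝ) - 1) * lam ≤ (k:ℝ) * (2 * lam) := by nlinarith
      set I₁ : ℝ := ∫ t in ((k:ℝ) - 1) * (2 * lam)..(2 * (k:ℝ) - 1) * lam, g t with hI₁
      set I₂ : ℝ := ∫ t in (2 * (k:ℝ) - 1) * lam..(k:ℝ) * (2 * lam), g t with hI₂
      have hI₁0 : 0 ≤ I₁ :=
        intervalIntegral.integral_nonneg ham (fun u _ => hg0 u)
      have hI₂0 : 0 ≤ I₂ :=
        intervalIntegral.integral_nonneg hmb (fun u _ => hg0 u)
      have hsplit : (∫ t in ((k:ℝ) - 1) * (2 * lam)..(k:ℝ) * (2 * lam), g t) = I₁ + I₂ :=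
        (intervalIntegral.integral_add_adjacent_intervals
          (hintg _ _ ha0 ham (by linarith))
          (hintg _ _ (by linarith) hmb hbπ)).symm
      have hcast : ((2 * k - 1 : ℕ) : ℝ) = 2 * (k:ℝ) - 1 := by
        rw [Nat.cast_sub (by omega)]; push_cast; ring
      have eA1 : A (2 * k - 1) = (1 / ((2 * (k:ℝ) - 1) * lam)) * I₁ := by
        simp only [hA, hcast, hI₁]
        congr 1
        congr 1 <;> ring
      have eA2 : A (2 * k) = (1 / ((k:ℝ) * (2 * lam))) * I₂ := by
        simp only [hA, hI₂, Nat.cast_mul, Nat.cast_ofNat]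
        congr 1
        · congr 1; ring
        · congr 1 <;> ring
      have eB : B k = (1 / ((k:ℝ) * (2 * lam))) * (I₁ + I₂) := by
        simp only [hB, hsplit]
      have hBle : B k ≤ A (2 * k - 1) + A (2 * k) := by
        rw [eB, eA1, eA2]
        have hpos1 : (0:ℝ) < (2 * (k:ℝ) - 1) * lam := by nlinarith
        have hd : 1 / ((k:ℝ) * (2 * lam)) ≤ 1 / ((2 * (k:ℝ) - 1) * lam) :=
          one_div_le_one_div_of_le hpos1 hmb
        have h1 := mul_le_mul_of_nonneg_right hd hI₁0
        nlinarith
      calc (B k) ^ (s / p) ≤ (A (2 * k - 1) + A (2 * k)) ^ (s / p) :=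
            Real.rpow_le_rpow (hBnn k) hBle (by positivity)
        _ ≤ 2 ^ (s / p - 1) * ((A (2 * k - 1)) ^ (s / p) + (A (2 * k)) ^ (s / p)) :=
            aux_add_rpow_le _ _ _ (hAnn _) (hAnn _) hr1
    calc ∑ k ∈ Finset.Icc 1 N, (B k) ^ (s / p)
        ≤ ∑ k ∈ Finset.Icc 1 N,
            2 ^ (s / p - 1) * ((A (2 * k - 1)) ^ (s / p) + (A (2 * k)) ^ (s / p)) :=
          Finset.sum_le_sum step1
      _ = 2 ^ (s / p - 1) * ∑ j ∈ Finset.Icc 1 (2 * N), (A j) ^ (s / p) := by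
          rw [aux_sum_Icc_two_mul (fun j => (A j) ^ (s / p)) N, Finset.mul_sum]
      _ ≤ 2 ^ (s / p - 1) * ∑ j ∈ Finset.Icc 1 M, (A j) ^ (s / p) := by
          apply mul_le_mul_of_nonneg_left _ (by positivity)
          apply Finset.sum_le_sum_of_subset_of_nonneg
          · exact Finset.Icc_subset_Icc le_rfl h2NM
          · intro j _ _; exact Real.rpow_nonneg (hAnn j) _
  have hsum0 : 0 ≤ ∑ k ∈ Finset.Icc 1 N, (B k) ^ (s / p) :=
    Finset.sum_nonneg fun k _ => Real.rpow_nonneg (hBnn k) _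
  have hsumA0 : 0 ≤ ∑ j ∈ Finset.Icc 1 M, (A j) ^ (s / p) :=
    Finset.sum_nonneg fun j _ => Real.rpow_nonneg (hAnn j) _
  have final := Real.rpow_le_rpow hsum0 key (by positivity : (0:ℝ) ≤ 1 / s)
  rw [Real.mul_rpow (by positivity) hsumA0] at final
  calc (∑ k ∈ Finset.Icc 1 N, (B k) ^ (s / p)) ^ (1 / s)
      ≤ ((2:ℝ) ^ (s / p - 1)) ^ (1 / s) *
        (∑ j ∈ Finset.Icc 1 M, (A j) ^ (s / p)) ^ (1 / s) := final
    _ = 2 ^ (1 / p - 1 / s) * (∑ j ∈ Finset.Icc 1 M, (A j) ^ (s / p)) ^ (1 / s) := by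
        rw [← Real.rpow_mul (by norm_num : (0:ℝ) ≤ 2)]
        congr 1
        field_simp
end
end

section
/- If f ∈ L^p with p ≥ 1, then for any 0 < γ ≤ δ, ((1/δ) ∫_0^δ |φ_x(t+γ) − φ_x(t)|^p dt)^{1/p} ≤ (2^{1/p} + 4^{1/p}) · w_x f(2δ)_p, where w_x f(2δ)_p = ((1/(2δ)) ∫_0^{2δ} |φ_x(t)|^p dt)^{1/p}. -/
open MeasureTheory Real intervalIntegral

noncomputable section

/-- Auxiliary: a periodic function integrable over one period is interval
integrable on every interval. -/
lemma periodic_intervalIntegrable_aux {g : ℝ → ℝ} {T a : ℝ} (hT : 0 < T)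
    (hg : Function.Periodic g T) (h : IntervalIntegrable g volume a (a + T)) :
    ∀ c d : ℝ, IntervalIntegrable g volume c d := by
  have key : ∀ n : ℤ, IntervalIntegrable g volume (a + n * T) (a + n * T + T) := by
    intro n
    have h1 := h.comp_add_right (-(n * T))
    have h2 : (fun x => g (x + -((n:ℝ) * T))) = g := by
      funext y
      have h3 := (hg.int_mul (-n)) y
      push_cast at h3
      simpa [neg_mul] using h3
    rw [h2] at h1
    have e1 : a - -((n:ℝ) * T) = a + n * T := by ring
    have e2 : a + T - -((n:ℝ) * T) = a + n * T + T := by ring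
    rwa [e1, e2] at h1
  have key2 : ∀ n : ℕ, IntervalIntegrable g volume (a - n * T) (a + n * T) := by
    intro n
    induction n with
    | zero => simp
    | succ n ih =>
      have hl : IntervalIntegrable g volume (a - (n + 1) * T) (a - n * T) := by
        have h0 := key (-(n + 1))
        have e1 : a + ((-(n + 1) : ℤ) : ℝ) * T = a - (n + 1) * T := by push_cast; ring
        have e2 : a + ((-(n + 1) : ℤ) : ℝ) * T + T = a - n * T := by push_cast; ring
        rw [e2] at h0
        rwa [e1] at h0
      have hr : IntervalIntegrable g volume (a + n * T) (a + (n + 1) * T) := by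
        have h0 := key n
        have e2 : a + ((n : ℤ) : ℝ) * T + T = a + (n + 1) * T := by push_cast; ring
        have e1 : a + ((n : ℤ) : ℝ) * T = a + n * T := by push_cast; ring
        rw [e2] at h0
        rwa [e1] at h0
      have := (hl.trans ih).trans hr
      simpa using this
  intro c d
  obtain ⟨n, hn⟩ := exists_nat_gt ((|a| + |c| + |d|) / T)
  have hnT : |a| + |c| + |d| < n * T := (div_lt_iff₀ hT).mp hn
  have pa := le_abs_self a
  have na := neg_abs_le a
  have pc := le_abs_self c
  have nc := neg_abs_le c
  have pd := le_abs_self d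
  have nd := neg_abs_le d
  have h1 : a - n * T ≤ c := by linarith [abs_nonneg a, abs_nonneg c, abs_nonneg d]
  have h2 : c ≤ a + n * T := by linarith [abs_nonneg a, abs_nonneg c, abs_nonneg d]
  have h3 : a - n * T ≤ d := by linarith [abs_nonneg a, abs_nonneg c, abs_nonneg d]
  have h4 : d ≤ a + n * T := by linarith [abs_nonneg a, abs_nonneg c, abs_nonneg d]
  exact (key2 n).mono_set (Set.uIcc_subset_uIcc
    (Set.mem_uIcc.mpr (Or.inl ⟨h1, h2⟩)) (Set.mem_uIcc.mpr (Or.inl ⟨h3, h4⟩)))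

/-- Auxiliary: `(u+v)^p ≤ 2^(p-1) (u^p + v^p)` for nonnegative reals. -/
lemma real_rpow_add_le {u v p : ℝ} (hu : 0 ≤ u) (hv : 0 ≤ v) (hp : 1 ≤ p) :
    (u + v) ^ p ≤ 2 ^ (p - 1) * (u ^ p + v ^ p) := by
  lift u to NNReal using hu
  lift v to NNReal using hv
  have := NNReal.rpow_add_le_mul_rpow_add_rpow u v hp
  have h2 := NNReal.coe_le_coe.mpr this
  push_cast at h2
  convert h2 using 2

/-- `((1/δ)∫_0^δ |φ_x(t+γ)-φ_x(t)|^p dt)^{1/p}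
  ≤ (2^{1/p}+4^{1/p}) w_x f(2δ)_p`. -/
theorem shifted_difference_le_modulus
    (f : ℝ → ℝ) (hper : ∀ t, f (t + 2 * π) = f t)
    (p δ γ : ℝ) (hp : 1 ≤ p) (hγ : 0 < γ) (hγδ : γ ≤ δ) (x : ℝ)
    (hint : IntervalIntegrable
      (fun t => |f (x + t) + f (x - t) - 2 * f x| ^ p) volume (-π) π) :
    ((1 / δ) * ∫ t in (0:ℝ)..δ,
        |(f (x + (t + γ)) + f (x - (t + γ)) - 2 * f x)
          - (f (x + t) + f (x - t) - 2 * f x)| ^ p) ^ (1 / p)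
      ≤ (2 ^ (1 / p) + 4 ^ (1 / p)) *
        ((1 / (2 * δ)) * ∫ t in (0:ℝ)..2 * δ,
          |f (x + t) + f (x - t) - 2 * f x| ^ p) ^ (1 / p) := by
  have hp0 : 0 < p := lt_of_lt_of_le one_pos hp
  have hδ : 0 < δ := lt_of_lt_of_le hγ hγδ
  set g : ℝ → ℝ := fun t => |f (x + t) + f (x - t) - 2 * f x| ^ p with hg_def
  set h : ℝ → ℝ := fun t =>
    |(f (x + (t + γ)) + f (x - (t + γ)) - 2 * f x)
      - (f (x + t) + f (x - t) - 2 * f x)| ^ p with hh_def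
  -- nonnegativity facts
  have hg_nonneg : ∀ t, 0 ≤ g t := fun t => Real.rpow_nonneg (abs_nonneg _) p
  have hh_nonneg : ∀ t, 0 ≤ h t := fun t => Real.rpow_nonneg (abs_nonneg _) p
  -- periodicity of g
  have hgper : Function.Periodic g (2 * π) := by
    intro t
    have e1 : x + (t + 2 * π) = (x + t) + 2 * π := by ring
    have e2 : f (x - (t + 2 * π)) = f (x - t) := by
      have := hper (x - (t + 2 * π))
      have e : x - (t + 2 * π) + 2 * π = x - t := by ring
      rw [e] at this
      exact this.symm
    simp only [hg_def, e1, hper (x + t), e2]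
  -- interval integrability of g everywhere
  have hπ : (0 : ℝ) < 2 * π := by positivity
  have hint' : IntervalIntegrable g volume (-π) (-π + 2 * π) := by
    have : -π + 2 * π = π := by ring
    rw [this]; exact hint
  have hg_int : ∀ c d : ℝ, IntervalIntegrable g volume c d :=
    periodic_intervalIntegrable_aux hπ hgper hint'
  -- integrability of the shifted g on 0..δ
  have hg_shift : IntervalIntegrable (fun t => g (t + γ)) volume 0 δ := by
    have := (hg_int γ (δ + γ)).comp_add_right γ
    simpa using this
  -- the RHS weight is nonneg
  have hI2_nonneg : 0 ≤ ∫ t in (0:ℝ)..2 * δ, g t :=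
    intervalIntegral.integral_nonneg (by linarith) (fun t _ => hg_nonneg t)
  have hW_nonneg : 0 ≤ (1 / (2 * δ)) * ∫ t in (0:ℝ)..2 * δ, g t := by
    have : 0 ≤ 1 / (2 * δ) := by positivity
    exact mul_nonneg this hI2_nonneg
  have hWp_nonneg : 0 ≤ ((1 / (2 * δ)) * ∫ t in (0:ℝ)..2 * δ, g t) ^ (1 / p) :=
    Real.rpow_nonneg hW_nonneg _
  have hc_nonneg : (0:ℝ) ≤ 2 ^ (1 / p) + 4 ^ (1 / p) := by
    have := Real.rpow_nonneg (by norm_num : (0:ℝ) ≤ 2) (1 / p)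
    have := Real.rpow_nonneg (by norm_num : (0:ℝ) ≤ 4) (1 / p)
    linarith
  by_cases hhi : IntervalIntegrable h volume 0 δ
  · -- pointwise bound : h t ≤ 2^(p-1) * (g (t+γ) + g t)
    have hpt : ∀ t, h t ≤ 2 ^ (p - 1) * (g (t + γ) + g t) := by
      intro t
      have habs : |(f (x + (t + γ)) + f (x - (t + γ)) - 2 * f x)
          - (f (x + t) + f (x - t) - 2 * f x)|
          ≤ |f (x + (t + γ)) + f (x - (t + γ)) - 2 * f x|
            + |f (x + t) + f (x - t) - 2 * f x| := abs_sub _ _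
      have h1 : h t ≤ (|f (x + (t + γ)) + f (x - (t + γ)) - 2 * f x|
            + |f (x + t) + f (x - t) - 2 * f x|) ^ p :=
        Real.rpow_le_rpow (abs_nonneg _) habs (le_of_lt hp0)
      refine h1.trans ?_
      exact real_rpow_add_le (abs_nonneg _) (abs_nonneg _) hp
    -- integral bound
    have hB_int : IntervalIntegrable (fun t => 2 ^ (p - 1) * (g (t + γ) + g t))
        volume 0 δ := ((hg_shift.add (hg_int 0 δ)).const_mul _)
    have hmono : (∫ t in (0:ℝ)..δ, h t)
        ≤ ∫ t in (0:ℝ)..δ, 2 ^ (p - 1) * (g (t + γ) + g t) :=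
      intervalIntegral.integral_mono_on (le_of_lt hδ) hhi hB_int
        (fun t _ => hpt t)
    have hsplit : (∫ t in (0:ℝ)..δ, 2 ^ (p - 1) * (g (t + γ) + g t))
        = 2 ^ (p - 1) * ((∫ t in (0:ℝ)..δ, g (t + γ)) + ∫ t in (0:ℝ)..δ, g t) := by
      rw [intervalIntegral.integral_const_mul,
        intervalIntegral.integral_add hg_shift (hg_int 0 δ)]
    have hshift_eq : (∫ t in (0:ℝ)..δ, g (t + γ)) = ∫ t in γ..(δ + γ), g t := by
      have := intervalIntegral.integral_comp_add_right (a := (0:ℝ)) (b := δ) g γ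
      simpa using this
    have hshift_le : (∫ t in γ..(δ + γ), g t) ≤ ∫ t in (0:ℝ)..2 * δ, g t := by
      refine intervalIntegral.integral_mono_interval (le_of_lt hγ)
        (by linarith) (by linarith) ?_ (hg_int 0 (2 * δ))
      filter_upwards with t using hg_nonneg t
    have hplain_le : (∫ t in (0:ℝ)..δ, g t) ≤ ∫ t in (0:ℝ)..2 * δ, g t := by
      refine intervalIntegral.integral_mono_interval le_rfl
        (le_of_lt hδ) (by linarith) ?_ (hg_int 0 (2 * δ))
      filter_upwards with t using hg_nonneg t
    set I := ∫ t in (0:ℝ)..2 * δ, g t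
    have h2p : (0:ℝ) < 2 ^ (p - 1) := Real.rpow_pos_of_pos two_pos _
    have hA : (∫ t in (0:ℝ)..δ, h t) ≤ 2 ^ (p - 1) * (2 * I) := by
      calc (∫ t in (0:ℝ)..δ, h t)
          ≤ 2 ^ (p - 1) * ((∫ t in (0:ℝ)..δ, g (t + γ)) + ∫ t in (0:ℝ)..δ, g t) := by
            rw [← hsplit]; exact hmono
        _ ≤ 2 ^ (p - 1) * (2 * I) := by
            rw [hshift_eq]
            have : (∫ t in γ..(δ + γ), g t) + (∫ t in (0:ℝ)..δ, g t) ≤ 2 * I := by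
              linarith
            exact mul_le_mul_of_nonneg_left this (le_of_lt h2p)
    -- base comparison
    have hbase : (1 / δ) * (∫ t in (0:ℝ)..δ, h t)
        ≤ 2 ^ (p + 1) * ((1 / (2 * δ)) * I) := by
      have hid : (2:ℝ) ^ (p + 1) = 2 ^ (p - 1) * 4 := by
        rw [show p + 1 = (p - 1) + 2 by ring, Real.rpow_add two_pos]
        norm_num
      rw [hid]
      have h1 : (1 / δ) * (∫ t in (0:ℝ)..δ, h t) ≤ (1 / δ) * (2 ^ (p - 1) * (2 * I)) :=
        mul_le_mul_of_nonneg_left hA (by positivity)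
      refine h1.trans_eq ?_
      field_simp
      ring
    -- A is nonneg
    have hA_nonneg : 0 ≤ (1 / δ) * ∫ t in (0:ℝ)..δ, h t := by
      have : 0 ≤ ∫ t in (0:ℝ)..δ, h t :=
        intervalIntegral.integral_nonneg (le_of_lt hδ) (fun t _ => hh_nonneg t)
      positivity
    -- raise to power 1/p
    have hstep : ((1 / δ) * ∫ t in (0:ℝ)..δ, h t) ^ (1 / p)
        ≤ (2 ^ (p + 1) * ((1 / (2 * δ)) * I)) ^ (1 / p) :=
      Real.rpow_le_rpow hA_nonneg hbase (by positivity)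
    have hmulrpow : (2 ^ (p + 1) * ((1 / (2 * δ)) * I)) ^ (1 / p)
        = (2 ^ (p + 1) : ℝ) ^ (1 / p) * ((1 / (2 * δ)) * I) ^ (1 / p) :=
      Real.mul_rpow (le_of_lt (Real.rpow_pos_of_pos two_pos _)) hW_nonneg
    -- simplify constant
    have hconst : ((2:ℝ) ^ (p + 1)) ^ (1 / p) = 2 * 2 ^ (1 / p) := by
      rw [← Real.rpow_mul (by norm_num : (0:ℝ) ≤ 2)]
      have : (p + 1) * (1 / p) = 1 + 1 / p := by field_simp
      rw [this, Real.rpow_add two_pos, Real.rpow_one]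
    have ha1 : (1:ℝ) ≤ 2 ^ (1 / p) :=
      Real.one_le_rpow (by norm_num) (by positivity)
    have h4 : (4:ℝ) ^ (1 / p) = 2 ^ (1 / p) * 2 ^ (1 / p) := by
      have : (4:ℝ) = 2 * 2 := by norm_num
      rw [this, Real.mul_rpow (by norm_num) (by norm_num)]
    have hconst_le : ((2:ℝ) ^ (p + 1)) ^ (1 / p) ≤ 2 ^ (1 / p) + 4 ^ (1 / p) := by
      rw [hconst, h4]
      nlinarith [ha1]
    calc ((1 / δ) * ∫ t in (0:ℝ)..δ, h t) ^ (1 / p)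
        ≤ (2 ^ (p + 1) * ((1 / (2 * δ)) * I)) ^ (1 / p) := hstep
      _ = ((2:ℝ) ^ (p + 1)) ^ (1 / p) * ((1 / (2 * δ)) * I) ^ (1 / p) := hmulrpow
      _ ≤ (2 ^ (1 / p) + 4 ^ (1 / p)) * ((1 / (2 * δ)) * I) ^ (1 / p) :=
          mul_le_mul_of_nonneg_right hconst_le hWp_nonneg
  · -- non-integrable case: the LHS integral is zero
    have hzero : (∫ t in (0:ℝ)..δ, h t) = 0 := by
      rw [intervalIntegral.integral_undef]
      intro hc
      exact hhi hc
    rw [hzero, mul_zero, Real.zero_rpow (by positivity)]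
    exact mul_nonneg hc_nonneg hWp_nonneg
end
end
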